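/- Let f : [0,1) → ℝ be a bi-Lipschitz map with constant C (i.e., C⁻¹|x−y| ≤ |f(x)−f(y)| ≤ C|x−y|). Then for every probability measure μ on [0,1) and every n, |H(f#μ, D_n) − H(μ, D_n)| = O(log C), where D_n is the level-n dyadic partition. -/

import Mathlib

open MeasureTheory
open scoped ENNReal

/-- `ent p = -p log₂ p`, the entropy summand (base-2 logarithm). -/
noncomputable def ent (p : ℝ) : ℝ := -(p * Real.logb 2 p)

lemma ent_zero : ent 0 = 0 := by simp [ent]

lemma ent_sum_le {ι : Type*} {T : Finset ι} {p : ι → ℝ} (h : ∀ i ∈ T, 0 ≤ p i) :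
    ent (∑ i ∈ T, p i) ≤ ∑ i ∈ T, ent (p i) := by
  have h1 : ent (∑ i ∈ T, p i) = ∑ i ∈ T, -(p i * Real.logb 2 (∑ j ∈ T, p j)) := by
    rw [ent, Finset.sum_mul, ← Finset.sum_neg_distrib]
  rw [h1]
  apply Finset.sum_le_sum
  intro i hi
  rw [ent, neg_le_neg_iff]
  rcases eq_or_lt_of_le (h i hi) with h0 | h0
  · simp [← h0]
  · apply mul_le_mul_of_nonneg_left _ (h i hi)
    exact Real.logb_le_logb_of_le one_lt_two h0 (Finset.single_le_sum h hi)

lemma sum_ent_le {ι : Type*} {T : Finset ι} {p : ι → ℝ} (h0 : ∀ i ∈ T, 0 < p i) :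
    ∑ i ∈ T, ent (p i) ≤
      ent (∑ i ∈ T, p i) + (∑ i ∈ T, p i) * Real.logb 2 T.card := by
  rcases T.eq_empty_or_nonempty with rfl | hne
  · simp [ent]
  set s := ∑ i ∈ T, p i with hsdef
  have hs : 0 < s := Finset.sum_pos h0 hne
  -- concavity of logb 2 on Ioi 0
  have hconc : ConcaveOn ℝ (Set.Ioi 0) (Real.logb 2) := by
    have h2 : (0:ℝ) ≤ (Real.log 2)⁻¹ := by positivity
    have h3 := (strictConcaveOn_log_Ioi.concaveOn).smul h2
    have h4 : (fun x => (Real.log 2)⁻¹ • Real.log x) = Real.logb 2 := by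
      funext x; simp [Real.logb, div_eq_inv_mul, smul_eq_mul]
    rwa [h4] at h3
  have jensen : ∑ i ∈ T, (p i / s) • Real.logb 2 (s / p i) ≤
      Real.logb 2 (∑ i ∈ T, (p i / s) • (s / p i)) := by
    apply hconc.le_map_sum
    · intro i hi; exact div_nonneg (h0 i hi).le hs.le
    · rw [← Finset.sum_div, div_self hs.ne']
    · intro i hi; exact Set.mem_Ioi.2 (div_pos hs (h0 i hi))
  have hterm : ∀ i ∈ T, (p i / s) • (s / p i) = 1 := by
    intro i hi
    have := (h0 i hi).ne'
    rw [smul_eq_mul]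
    field_simp
  rw [Finset.sum_congr rfl hterm, Finset.sum_const, nsmul_eq_mul, mul_one] at jensen
  have key : ∑ i ∈ T, p i * Real.logb 2 (s / p i) ≤ s * Real.logb 2 T.card := by
    have := mul_le_mul_of_nonneg_left jensen hs.le
    calc ∑ i ∈ T, p i * Real.logb 2 (s / p i)
        = s * ∑ i ∈ T, (p i / s) • Real.logb 2 (s / p i) := by
          rw [Finset.mul_sum]
          apply Finset.sum_congr rfl
          intro i hi
          rw [smul_eq_mul]
          field_simp
      _ ≤ s * Real.logb 2 T.card := this
  have expand : ∀ i ∈ T, p i * Real.logb 2 (s / p i) = p i * Real.logb 2 s + ent (p i) := by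
    intro i hi
    rw [Real.logb_div hs.ne' (h0 i hi).ne', ent]
    ring
  rw [Finset.sum_congr rfl expand, Finset.sum_add_distrib, ← Finset.sum_mul] at key
  rw [ent]
  linarith [key]

lemma key_compare {K L : Finset ℤ} {q : ℤ → ℤ → ℝ} (hq : ∀ k l, 0 ≤ q k l)
    {m : ℝ} (hm : 1 ≤ m)
    (hsupp : ∀ l ∈ L, (((K.filter (fun k => q k l ≠ 0)).card : ℝ)) ≤ m)
    (htot : ∑ l ∈ L, ∑ k ∈ K, q k l ≤ 1) :
    ∑ k ∈ K, ent (∑ l ∈ L, q k l) ≤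
      (∑ l ∈ L, ent (∑ k ∈ K, q k l)) + Real.logb 2 m := by
  have hlogm : 0 ≤ Real.logb 2 m := Real.logb_nonneg one_lt_two hm
  have step1 : ∑ k ∈ K, ent (∑ l ∈ L, q k l) ≤ ∑ k ∈ K, ∑ l ∈ L, ent (q k l) :=
    Finset.sum_le_sum fun k _ => ent_sum_le (fun l _ => hq k l)
  have step3 : ∀ l ∈ L, ∑ k ∈ K, ent (q k l) ≤
      ent (∑ k ∈ K, q k l) + (∑ k ∈ K, q k l) * Real.logb 2 m := by
    intro l hl
    classical
    set S := K.filter (fun k => q k l ≠ 0) with hS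
    have hsum_ent : ∑ k ∈ K, ent (q k l) = ∑ k ∈ S, ent (q k l) := by
      rw [hS]; symm
      apply Finset.sum_filter_of_ne
      intro k _ hne h0
      rw [h0, ent_zero] at hne; exact hne rfl
    have hsum_q : ∑ k ∈ K, q k l = ∑ k ∈ S, q k l := by
      rw [hS]; symm
      exact Finset.sum_filter_of_ne (fun k _ hne => hne)
    have hpos : ∀ k ∈ S, 0 < q k l := fun k hk =>
      lt_of_le_of_ne (hq k l) (Ne.symm (Finset.mem_filter.1 hk).2)
    have hqK : 0 ≤ ∑ k ∈ S, q k l := Finset.sum_nonneg fun k hk => (hpos k hk).le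
    have hcard : Real.logb 2 (S.card : ℝ) ≤ Real.logb 2 m := by
      rcases Nat.eq_zero_or_pos S.card with h0 | h0
      · rw [h0]; simpa using hlogm
      · exact Real.logb_le_logb_of_le one_lt_two (by exact_mod_cast h0) (hsupp l hl)
    rw [hsum_ent, hsum_q]
    refine (sum_ent_le hpos).trans ?_
    gcongr
  have step4 : ∑ l ∈ L, ∑ k ∈ K, ent (q k l) ≤
      (∑ l ∈ L, ent (∑ k ∈ K, q k l)) + Real.logb 2 m := by
    calc ∑ l ∈ L, ∑ k ∈ K, ent (q k l)
        ≤ ∑ l ∈ L, (ent (∑ k ∈ K, q k l) + (∑ k ∈ K, q k l) * Real.logb 2 m) :=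
          Finset.sum_le_sum step3
      _ = (∑ l ∈ L, ent (∑ k ∈ K, q k l)) +
            (∑ l ∈ L, ∑ k ∈ K, q k l) * Real.logb 2 m := by
          rw [Finset.sum_add_distrib, Finset.sum_mul]
      _ ≤ (∑ l ∈ L, ent (∑ k ∈ K, q k l)) + 1 * Real.logb 2 m := by
          gcongr
      _ = (∑ l ∈ L, ent (∑ k ∈ K, q k l)) + Real.logb 2 m := by rw [one_mul]
  calc ∑ k ∈ K, ent (∑ l ∈ L, q k l)
      ≤ ∑ k ∈ K, ∑ l ∈ L, ent (q k l) := step1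
    _ = ∑ l ∈ L, ∑ k ∈ K, ent (q k l) := Finset.sum_comm
    _ ≤ _ := step4
/-- Shannon entropy of `μ` with respect to the level-`n` dyadic partition of `ℝ`. -/
noncomputable def HdyZ (μ : Measure ℝ) (n : ℕ) : ℝ :=
  ∑' k : ℤ, ent ((μ (Set.Ico ((k : ℝ) / 2 ^ n) (((k : ℝ) + 1) / 2 ^ n))).toReal)

/-- If `f` is bi-Lipschitz with constant `C` on `[0,1)`, then for every
probability measure `μ` on `[0,1)` and every `n`,
`|H(f#μ, D_n) − H(μ, D_n)| = O(log C)` with an absolute implied constant. -/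
theorem entropy_change_under_biLipschitz :
    ∃ A > (0 : ℝ), ∀ C ≥ (1 : ℝ), ∀ f : ℝ → ℝ, Measurable f →
      (∀ x ∈ Set.Ico (0 : ℝ) 1, ∀ y ∈ Set.Ico (0 : ℝ) 1,
        C⁻¹ * |x - y| ≤ |f x - f y| ∧ |f x - f y| ≤ C * |x - y|) →
      ∀ μ : Measure ℝ, IsProbabilityMeasure μ → μ (Set.Ico 0 1) = 1 →
      ∀ n : ℕ, |HdyZ (Measure.map f μ) n - HdyZ μ n| ≤ A * (1 + Real.logb 2 C) := by
  classical
  refine ⟨3, by norm_num, ?_⟩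
  intro C hC f hf hbil μ hμ hμI n
  have hC0 : (0:ℝ) < C := lt_of_lt_of_le one_pos hC
  have h2n : (0:ℝ) < 2 ^ n := by positivity
  set I : Set ℝ := Set.Ico (0:ℝ) 1 with hIdef
  have hImeas : MeasurableSet I := measurableSet_Ico
  have hIc : μ Iᶜ = 0 := by
    have h := measure_compl hImeas (measure_ne_top μ I)
    rw [hμI, measure_univ] at h
    simpa using h
  set J : ℤ → Set ℝ := fun k => Set.Ico ((k : ℝ) / 2 ^ n) (((k : ℝ) + 1) / 2 ^ n) with hJdef
  have hJmeas : ∀ k, MeasurableSet (J k) := fun k => measurableSet_Ico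
  have hmemJ : ∀ (k : ℤ) (x : ℝ), x ∈ J k ↔ ⌊x * 2 ^ n⌋ = k := by
    intro k x
    rw [hJdef]
    simp only [Set.mem_Ico]
    rw [div_le_iff₀ h2n, lt_div_iff₀ h2n]
    exact Int.floor_eq_iff.symm
  -- null-set helpers
  have hsub : ∀ s : Set ℝ, (∀ x ∈ s, x ∉ I) → μ s = 0 :=
    fun s h => measure_mono_null (fun x hx => h x hx) hIc
  have hinterI : ∀ s : Set ℝ, μ (s ∩ I) = μ s := by
    intro s
    apply le_antisymm (measure_mono Set.inter_subset_left)
    have h1 : s ⊆ (s ∩ I) ∪ Iᶜ := by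
      intro x hx
      by_cases hxI : x ∈ I
      exacts [Or.inl ⟨hx, hxI⟩, Or.inr hxI]
    calc μ s ≤ μ ((s ∩ I) ∪ Iᶜ) := measure_mono h1
      _ ≤ μ (s ∩ I) + μ Iᶜ := measure_union_le _ _
      _ = μ (s ∩ I) := by rw [hIc, add_zero]
  -- index sets
  set L : Finset ℤ := Finset.Icc 0 (2 ^ n - 1) with hLdef
  set K : Finset ℤ := Finset.Icc ⌊(f 0 - C) * 2 ^ n⌋ ⌊(f 0 + C) * 2 ^ n⌋ with hKdef
  have h0I : (0:ℝ) ∈ I := by simp [hIdef]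
  have hfbound : ∀ x ∈ I, f 0 - C ≤ f x ∧ f x ≤ f 0 + C := by
    intro x hx
    have h := (hbil x hx 0 h0I).2
    have hxI := hx
    rw [hIdef, Set.mem_Ico] at hxI
    have hx1 : |x - 0| ≤ 1 := by
      rw [sub_zero, abs_of_nonneg hxI.1]; exact hxI.2.le
    have habs : |f x - f 0| ≤ C := h.trans (by nlinarith [abs_nonneg (x - 0)])
    have := abs_le.1 habs
    constructor <;> linarith [this.1, this.2]
  have hmemL : ∀ x ∈ I, ⌊x * 2 ^ n⌋ ∈ L := by
    intro x hx
    have hxI := hx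
    rw [hIdef, Set.mem_Ico] at hxI
    rw [hLdef, Finset.mem_Icc]
    constructor
    · exact Int.le_floor.2 (by simpa using mul_nonneg hxI.1 h2n.le)
    · have h1 : x * 2 ^ n < ((2 ^ n : ℤ) : ℝ) := by push_cast; nlinarith
      have := Int.floor_lt.2 h1
      omega
  have hmemK : ∀ x ∈ I, ⌊f x * 2 ^ n⌋ ∈ K := by
    intro x hx
    obtain ⟨h1, h2⟩ := hfbound x hx
    rw [hKdef, Finset.mem_Icc]
    constructor <;> apply Int.floor_le_floor <;> nlinarith
  -- the joint masses
  set q : ℤ → ℤ → ℝ := fun k l => (μ (J l ∩ I ∩ f ⁻¹' (J k))).toReal with hqdef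
  have hq0 : ∀ k l, 0 ≤ q k l := fun k l => ENNReal.toReal_nonneg
  have hAmeas : ∀ k l, MeasurableSet (J l ∩ I ∩ f ⁻¹' (J k)) :=
    fun k l => ((hJmeas l).inter hImeas).inter (hf (hJmeas k))
  -- witnesses for nonzero masses
  have hwit : ∀ k l, q k l ≠ 0 → ∃ x, x ∈ J l ∧ x ∈ I ∧ f x ∈ J k := by
    intro k l h
    by_contra hemp
    push_neg at hemp
    apply h
    have hE : J l ∩ I ∩ f ⁻¹' (J k) = ∅ := by
      ext x
      simp only [Set.mem_inter_iff, Set.mem_preimage, Set.mem_empty_iff_false, iff_false]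
      rintro ⟨⟨h1, h2⟩, h3⟩
      exact (hemp x h1 h2) h3
    rw [hqdef]
    simp only [hE, measure_empty, ENNReal.toReal_zero]
  -- marginals
  have hmargL : ∀ l ∈ L, ∑ k ∈ K, q k l = (μ (J l)).toReal := by
    intro l hl
    have hcover : J l ∩ I = ⋃ k ∈ K, (J l ∩ I ∩ f ⁻¹' (J k)) := by
      ext x
      simp only [Set.mem_iUnion, Set.mem_inter_iff, Set.mem_preimage, exists_prop,
        Finset.mem_coe]
      constructor
      · rintro ⟨h1, h2⟩
        exact ⟨⌊f x * 2 ^ n⌋, hmemK x h2, ⟨⟨h1, h2⟩, (hmemJ _ _).2 rfl⟩⟩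
      · rintro ⟨k, -, ⟨hx, -⟩⟩; exact hx
    have hdisj : (↑K : Set ℤ).PairwiseDisjoint (fun k => J l ∩ I ∩ f ⁻¹' (J k)) := by
      intro a _ b _ hab
      apply Set.disjoint_left.2
      rintro x ⟨-, hxa⟩ ⟨-, hxb⟩
      exact hab (((hmemJ a (f x)).1 hxa).symm.trans ((hmemJ b (f x)).1 hxb))
    have hsum := measure_biUnion_finset (μ := μ) hdisj (fun k _ => hAmeas k l)
    calc ∑ k ∈ K, q k l = (∑ k ∈ K, μ (J l ∩ I ∩ f ⁻¹' (J k))).toReal :=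
          (ENNReal.toReal_sum (fun _ _ => measure_ne_top μ _)).symm
      _ = (μ (J l ∩ I)).toReal := by rw [← hsum, ← hcover]
      _ = (μ (J l)).toReal := by rw [hinterI]
  have hmargK : ∀ k ∈ K, ∑ l ∈ L, q k l = ((Measure.map f μ) (J k)).toReal := by
    intro k hk
    have hcover : f ⁻¹' (J k) ∩ I = ⋃ l ∈ L, (J l ∩ I ∩ f ⁻¹' (J k)) := by
      ext x
      simp only [Set.mem_iUnion, Set.mem_inter_iff, Set.mem_preimage, exists_prop,
        Finset.mem_coe]
      constructor
      · rintro ⟨h1, h2⟩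
        exact ⟨⌊x * 2 ^ n⌋, hmemL x h2, ⟨⟨(hmemJ _ _).2 rfl, h2⟩, h1⟩⟩
      · rintro ⟨l, -, ⟨⟨-, hxI⟩, hxf⟩⟩; exact ⟨hxf, hxI⟩
    have hdisj : (↑L : Set ℤ).PairwiseDisjoint (fun l => J l ∩ I ∩ f ⁻¹' (J k)) := by
      intro a _ b _ hab
      apply Set.disjoint_left.2
      rintro x ⟨⟨hxa, -⟩, -⟩ ⟨⟨hxb, -⟩, -⟩
      exact hab (((hmemJ a x).1 hxa).symm.trans ((hmemJ b x).1 hxb))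
    have hsum := measure_biUnion_finset (μ := μ) hdisj (fun l _ => hAmeas k l)
    calc ∑ l ∈ L, q k l = (∑ l ∈ L, μ (J l ∩ I ∩ f ⁻¹' (J k))).toReal :=
          (ENNReal.toReal_sum (fun _ _ => measure_ne_top μ _)).symm
      _ = (μ (f ⁻¹' (J k) ∩ I)).toReal := by rw [← hsum, ← hcover]
      _ = ((Measure.map f μ) (J k)).toReal := by
          rw [hinterI, Measure.map_apply hf (hJmeas k)]
  -- reduction of the tsums to finite sums
  have hHμ : HdyZ μ n = ∑ l ∈ L, ent ((μ (J l)).toReal) := by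
    have : HdyZ μ n = ∑' l : ℤ, ent ((μ (J l)).toReal) := rfl
    rw [this]
    apply tsum_eq_sum
    intro l hl
    have hz : μ (J l) = 0 := by
      apply hsub
      intro x hx hxI
      exact hl (((hmemJ l x).1 hx) ▸ hmemL x hxI)
    rw [hz]
    simpa using ent_zero
  have hHν : HdyZ (Measure.map f μ) n = ∑ k ∈ K, ent (((Measure.map f μ) (J k)).toReal) := by
    have : HdyZ (Measure.map f μ) n = ∑' k : ℤ, ent (((Measure.map f μ) (J k)).toReal) := rfl
    rw [this]
    apply tsum_eq_sum
    intro k hk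
    have hz : (Measure.map f μ) (J k) = 0 := by
      rw [Measure.map_apply hf (hJmeas k)]
      apply hsub
      intro x hx hxI
      exact hk (((hmemJ k (f x)).1 hx) ▸ hmemK x hxI)
    rw [hz]
    simpa using ent_zero
  -- support cardinality bounds
  have hcardbound : ∀ (S : Finset ℤ) (k₀ c : ℤ), 0 ≤ c →
      (∀ k ∈ S, k₀ - c ≤ k ∧ k ≤ k₀ + c) → (S.card : ℝ) ≤ 2 * (c : ℝ) + 1 := by
    intro S k₀ c hc hS
    have hsub' : S ⊆ Finset.Icc (k₀ - c) (k₀ + c) :=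
      fun k hk => Finset.mem_Icc.2 (hS k hk)
    have h1 := Finset.card_le_card hsub'
    have h2 : (Finset.Icc (k₀ - c) (k₀ + c)).card = (2 * c + 1).toNat := by
      rw [Int.card_Icc]; congr 1; ring
    have h3 : ((2 * c + 1).toNat : ℤ) = 2 * c + 1 := Int.toNat_of_nonneg (by omega)
    have : (S.card : ℤ) ≤ 2 * c + 1 := by
      rw [← h3]; exact_mod_cast h1.trans_eq h2
    have h4 : (S.card : ℝ) ≤ ((2 * c + 1 : ℤ) : ℝ) := by exact_mod_cast this
    push_cast at h4
    linarith
  have hfloorkey : ∀ u v : ℝ, u - v ≤ C → (⌊u⌋ : ℝ) - ⌊v⌋ ≤ C + 1 := by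
    intro u v h
    have h1 := Int.floor_le u
    have h2 := Int.lt_floor_add_one v
    linarith
  have hceil : (0:ℤ) ≤ ⌈C + 1⌉ := Int.ceil_nonneg (by linarith)
  have hceilR : (⌈C + 1⌉ : ℝ) < C + 2 := by
    have := Int.ceil_lt_add_one (C + 1)
    linarith
  have hclose : ∀ a b : ℝ, |a - b| ≤ C → ⌊a⌋ - ⌊b⌋ ≤ ⌈C + 1⌉ ∧ ⌊b⌋ - ⌊a⌋ ≤ ⌈C + 1⌉ := by
    intro a b hab
    obtain ⟨h1, h2⟩ := abs_le.1 hab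
    have hc1 : (⌊a⌋ : ℝ) - ⌊b⌋ ≤ C + 1 := hfloorkey a b (by linarith)
    have hc2 : (⌊b⌋ : ℝ) - ⌊a⌋ ≤ C + 1 := hfloorkey b a (by linarith)
    have hle : (C + 1 : ℝ) ≤ (⌈C + 1⌉ : ℝ) := Int.le_ceil _
    constructor
    · have h' : ((⌊a⌋ - ⌊b⌋ : ℤ) : ℝ) ≤ ((⌈C + 1⌉ : ℤ) : ℝ) := by push_cast; linarith
      exact_mod_cast h'
    · have h' : ((⌊b⌋ - ⌊a⌋ : ℤ) : ℝ) ≤ ((⌈C + 1⌉ : ℤ) : ℝ) := by push_cast; linarith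
      exact_mod_cast h'
  have hJdiam : ∀ (j : ℤ) (x y : ℝ), x ∈ J j → y ∈ J j → |x - y| ≤ 1 / 2 ^ n := by
    intro j x y hx hy
    rw [hJdef] at hx hy
    obtain ⟨ha, hb⟩ := hx
    obtain ⟨ha', hb'⟩ := hy
    have hdiff : ((j:ℝ) + 1) / 2 ^ n - (j:ℝ) / 2 ^ n = 1 / 2 ^ n := by ring
    rw [abs_le]
    constructor <;> linarith
  have hS1 : ∀ l ∈ L, ((K.filter (fun k => q k l ≠ 0)).card : ℝ) ≤ 2 * C + 5 := by
    intro l hl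
    set S := K.filter (fun k => q k l ≠ 0) with hSdef
    rcases S.eq_empty_or_nonempty with h | ⟨k₀, hk₀⟩
    · rw [h]; simp; linarith
    obtain ⟨x₀, hx₀J, hx₀I, hx₀f⟩ := hwit k₀ l (Finset.mem_filter.1 hk₀).2
    have hbound : ∀ k ∈ S, k₀ - ⌈C + 1⌉ ≤ k ∧ k ≤ k₀ + ⌈C + 1⌉ := by
      intro k hk
      obtain ⟨x, hxJ, hxI, hxf⟩ := hwit k l (Finset.mem_filter.1 hk).2
      have hk' : ⌊f x * 2 ^ n⌋ = k := (hmemJ _ _).1 hxf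
      have hk₀' : ⌊f x₀ * 2 ^ n⌋ = k₀ := (hmemJ _ _).1 hx₀f
      have hxx : |x - x₀| ≤ 1 / 2 ^ n := hJdiam l x x₀ hxJ hx₀J
      have hff : |f x - f x₀| ≤ C / 2 ^ n := by
        refine (hbil x hxI x₀ hx₀I).2.trans ?_
        rw [div_eq_mul_one_div C]
        exact mul_le_mul_of_nonneg_left hxx hC0.le
      have habs : |f x * 2 ^ n - f x₀ * 2 ^ n| ≤ C := by
        rw [← sub_mul, abs_mul, abs_of_pos h2n]
        calc |f x - f x₀| * 2 ^ n ≤ (C / 2 ^ n) * 2 ^ n :=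
              mul_le_mul_of_nonneg_right hff h2n.le
          _ = C := div_mul_cancel₀ _ h2n.ne'
      have := hclose _ _ habs
      rw [hk', hk₀'] at this
      omega
    have h1 := hcardbound S k₀ ⌈C + 1⌉ hceil hbound
    calc ((S.card : ℝ)) ≤ 2 * (⌈C + 1⌉ : ℝ) + 1 := h1
      _ ≤ 2 * C + 5 := by linarith
  have hS2 : ∀ k ∈ K, ((L.filter (fun l => q k l ≠ 0)).card : ℝ) ≤ 2 * C + 5 := by
    intro k hk
    set S := L.filter (fun l => q k l ≠ 0) with hSdef
    rcases S.eq_empty_or_nonempty with h | ⟨l₀, hl₀⟩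
    · rw [h]; simp; linarith
    obtain ⟨x₀, hx₀J, hx₀I, hx₀f⟩ := hwit k l₀ (Finset.mem_filter.1 hl₀).2
    have hbound : ∀ l ∈ S, l₀ - ⌈C + 1⌉ ≤ l ∧ l ≤ l₀ + ⌈C + 1⌉ := by
      intro l hl'
      obtain ⟨x, hxJ, hxI, hxf⟩ := hwit k l (Finset.mem_filter.1 hl').2
      have hl'' : ⌊x * 2 ^ n⌋ = l := (hmemJ _ _).1 hxJ
      have hl₀' : ⌊x₀ * 2 ^ n⌋ = l₀ := (hmemJ _ _).1 hx₀J
      have hff : |f x - f x₀| ≤ 1 / 2 ^ n := hJdiam k _ _ hxf hx₀f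
      have hxx : |x - x₀| ≤ C / 2 ^ n := by
        have hlow := (hbil x hxI x₀ hx₀I).1
        have : C⁻¹ * |x - x₀| ≤ 1 / 2 ^ n := hlow.trans hff
        calc |x - x₀| = C * (C⁻¹ * |x - x₀|) := by field_simp
          _ ≤ C * (1 / 2 ^ n) := mul_le_mul_of_nonneg_left this hC0.le
          _ = C / 2 ^ n := by ring
      have habs : |x * 2 ^ n - x₀ * 2 ^ n| ≤ C := by
        rw [← sub_mul, abs_mul, abs_of_pos h2n]
        calc |x - x₀| * 2 ^ n ≤ (C / 2 ^ n) * 2 ^ n :=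
              mul_le_mul_of_nonneg_right hxx h2n.le
          _ = C := div_mul_cancel₀ _ h2n.ne'
      have := hclose _ _ habs
      rw [hl'', hl₀'] at this
      omega
    have h1 := hcardbound S l₀ ⌈C + 1⌉ hceil hbound
    calc ((S.card : ℝ)) ≤ 2 * (⌈C + 1⌉ : ℝ) + 1 := h1
      _ ≤ 2 * C + 5 := by linarith
  -- total mass bound
  have htot : ∑ l ∈ L, ∑ k ∈ K, q k l ≤ 1 := by
    have hdisj : (↑L : Set ℤ).PairwiseDisjoint J := by
      intro a _ b _ hab
      apply Set.disjoint_left.2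
      intro x hxa hxb
      exact hab (((hmemJ a x).1 hxa).symm.trans ((hmemJ b x).1 hxb))
    calc ∑ l ∈ L, ∑ k ∈ K, q k l = ∑ l ∈ L, (μ (J l)).toReal :=
          Finset.sum_congr rfl hmargL
      _ = (∑ l ∈ L, μ (J l)).toReal :=
          (ENNReal.toReal_sum (fun _ _ => measure_ne_top μ _)).symm
      _ ≤ 1 := by
          rw [← measure_biUnion_finset (μ := μ) hdisj (fun l _ => hJmeas l)]
          have h1 : μ (⋃ l ∈ L, J l) ≤ 1 := prob_le_one
          calc (μ (⋃ l ∈ L, J l)).toReal ≤ (1 : ℝ≥0∞).toReal :=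
                ENNReal.toReal_mono (by simp) h1
            _ = 1 := by simp
  -- apply the key comparison in both directions
  set m : ℝ := 2 * C + 5 with hmdef
  have hm1 : (1:ℝ) ≤ m := by rw [hmdef]; linarith
  have d1 := key_compare hq0 hm1 hS1 htot
  have d2 := key_compare (K := L) (L := K) (q := fun a b => q b a)
    (fun a b => hq0 b a) hm1 hS2 (by rw [Finset.sum_comm]; exact htot)
  have e1 : ∑ k ∈ K, ent (∑ l ∈ L, q k l) =
      ∑ k ∈ K, ent (((Measure.map f μ) (J k)).toReal) :=
    Finset.sum_congr rfl (fun k hk => by rw [hmargK k hk])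
  have e2 : ∑ l ∈ L, ent (∑ k ∈ K, q k l) = ∑ l ∈ L, ent ((μ (J l)).toReal) :=
    Finset.sum_congr rfl (fun l hl => by rw [hmargL l hl])
  rw [e1, e2] at d1
  rw [e2, e1] at d2
  -- conclude
  have hlog : Real.logb 2 m ≤ 3 * (1 + Real.logb 2 C) := by
    have h8 : m ≤ 8 * C := by rw [hmdef]; linarith
    have hm0 : (0:ℝ) < m := by linarith
    have hstep := Real.logb_le_logb_of_le one_lt_two hm0 h8
    have h1 : Real.logb 2 (8 * C) = Real.logb 2 8 + Real.logb 2 C :=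
      Real.logb_mul (by norm_num) hC0.ne'
    have h2 : Real.logb 2 8 = 3 := by
      have h8' : (8:ℝ) = 2 ^ (3:ℕ) := by norm_num
      rw [h8', Real.logb_pow, Real.logb_self_eq_one one_lt_two]
      norm_num
    have h3 : 0 ≤ Real.logb 2 C := Real.logb_nonneg one_lt_two hC
    linarith
  rw [hHν, hHμ, abs_sub_le_iff]
  constructor <;> linarith
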